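/- Let C be a nonempty finite type, f : C → ℝ^n any function, P a Borel probability measure on ℝ^n, d : ℝ^n → ℝ^n → ℝ≥0∞ a Borel-measurable cost, and κ a Markov kernel from ℝ^n to C whose mixture ∫ κ(x, ·) dP(x) equals a probability measure γ on C. Then ∫ ∑_{c ∈ C} κ(x, {c}) · d(f c, x) dP(x) ≥ W_d(f#γ, P), the infimum of ∫ d(y, x) dπ(y, x) over all couplings π of f#γ and P. -/

import Mathlib

open MeasureTheory ProbabilityTheory ENNReal

/-- Kantorovich cost `W_c(μ, ν)`: the infimum of `∫ c(x, y) dπ(x, y)` over all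
probability measures `π` on the product whose first marginal is `μ` and whose
second marginal is `ν`. -/
noncomputable def Wcost {X Y : Type*} [MeasurableSpace X] [MeasurableSpace Y]
    (c : X → Y → ℝ≥0∞) (μ : Measure X) (ν : Measure Y) : ℝ≥0∞ :=
  ⨅ (π : Measure (X × Y)) (_ : IsProbabilityMeasure π)
    (_ : π.fst = μ) (_ : π.snd = ν), ∫⁻ p, c p.1 p.2 ∂π

lemma snd_compProd_eq_bind {X Y : Type*} [MeasurableSpace X] [MeasurableSpace Y]
    (μ : Measure X) [SFinite μ] (κ : ProbabilityTheory.Kernel X Y) [ProbabilityTheory.IsSFiniteKernel κ] :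
    (μ ⊗ₘ κ).snd = μ.bind (fun x => κ x) := by
  ext s hs
  rw [Measure.snd_apply hs, Measure.compProd_apply (measurable_snd hs),
    Measure.bind_apply hs (Kernel.measurable κ).aemeasurable]
  rfl

/-- **Eq. (52) in the proof of Theorem 1**: for a nonempty finite type `C`, a decoder
`f : C → ℝ^n`, a Borel probability measure `P` on `ℝ^n`, a Borel-measurable cost `d`,
and a Markov kernel `κ` from `ℝ^n` to `C` whose mixture under `P` equals `γ`, the
expected distortion `∫ ∑_c κ(x,{c}) · d(f c, x) dP(x)` dominates the Kantorovich cost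
`W_d(f#γ, P)`. -/
theorem stmt13 {n : ℕ} {C : Type*} [Fintype C] [Nonempty C]
    [MeasurableSpace C] [DiscreteMeasurableSpace C]
    (f : C → EuclideanSpace ℝ (Fin n))
    (P : Measure (EuclideanSpace ℝ (Fin n))) [IsProbabilityMeasure P]
    (d : EuclideanSpace ℝ (Fin n) → EuclideanSpace ℝ (Fin n) → ℝ≥0∞)
    (hd : Measurable (Function.uncurry d))
    (κ : Kernel (EuclideanSpace ℝ (Fin n)) C) [IsMarkovKernel κ]
    (γ : Measure C) [IsProbabilityMeasure γ]
    (hκ : P.bind (fun x => κ x) = γ) :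
    (∫⁻ x, ∑ c, κ x {c} * d (f c) x ∂P) ≥ Wcost d (γ.map f) P := by
  have hf : Measurable f := measurable_of_countable f
  have hmap : Measurable (fun p : EuclideanSpace ℝ (Fin n) × C => (f p.2, p.1)) :=
    (hf.comp measurable_snd).prodMk measurable_fst
  set π : Measure (EuclideanSpace ℝ (Fin n) × EuclideanSpace ℝ (Fin n)) :=
    (P ⊗ₘ κ).map (fun p => (f p.2, p.1)) with hπ
  have hprob : IsProbabilityMeasure π := by
    rw [hπ]; exact Measure.isProbabilityMeasure_map hmap.aemeasurable
  have hfst : π.fst = γ.map f := by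
    rw [hπ, Measure.fst, Measure.map_map measurable_fst hmap]
    have : (Prod.fst ∘ fun p : EuclideanSpace ℝ (Fin n) × C => (f p.2, p.1))
        = f ∘ Prod.snd := rfl
    rw [this, ← Measure.map_map hf measurable_snd, ← Measure.snd,
      snd_compProd_eq_bind, hκ]
  have hsnd : π.snd = P := by
    rw [hπ, Measure.snd, Measure.map_map measurable_snd hmap]
    have : (Prod.snd ∘ fun p : EuclideanSpace ℝ (Fin n) × C => (f p.2, p.1))
        = Prod.fst := rfl
    rw [this, ← Measure.fst, Measure.fst_compProd]
  have hint : ∫⁻ p, d p.1 p.2 ∂π = ∫⁻ x, ∑ c, κ x {c} * d (f c) x ∂P := by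
    rw [hπ, show (fun p : EuclideanSpace ℝ (Fin n) × EuclideanSpace ℝ (Fin n) => d p.1 p.2) = Function.uncurry d from rfl, lintegral_map hd hmap]
    rw [show (fun a : EuclideanSpace ℝ (Fin n) × C => Function.uncurry d (f a.2, a.1))
        = (fun a : EuclideanSpace ℝ (Fin n) × C => d (f a.2) a.1) from rfl,
      Measure.lintegral_compProd (show Measurable (fun a : EuclideanSpace ℝ (Fin n) × C => d (f a.2) a.1) from hd.comp ((hf.comp measurable_snd).prodMk measurable_fst))]
    refine lintegral_congr fun x => ?_
    rw [lintegral_fintype]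
    exact Finset.sum_congr rfl fun c _ => mul_comm _ _
  calc Wcost d (γ.map f) P ≤ ∫⁻ p, d p.1 p.2 ∂π := by
        exact iInf_le_of_le π (iInf_le_of_le hprob (iInf_le_of_le hfst (iInf_le _ hsnd)))
    _ = _ := hint
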